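/- Let k ≥ 1 and let M_k denote the oriented matching with k arcs, i.e. the oriented graph on 2k vertices consisting of k pairwise vertex-disjoint arcs. Then there exists N such that for all n ≥ N, exo(n, M_k) = (k−1)(n−k+1) + binom(k−1, 2). -/

import Mathlib

/-- An oriented graph `G` contains a copy of the oriented graph `F`. -/
def Copies {α β : Type*} (F : α → α → Prop) (G : β → β → Prop) : Prop :=
  ∃ f : α → β, Function.Injective f ∧ ∀ a b, F a b → G (f a) (f b)

/-- The oriented Turán number. -/
noncomputable def exo {α : Type*} (n : ℕ) (F : α → α → Prop) : ℕ :=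
  sSup {m : ℕ | ∃ G : Fin n → Fin n → Prop,
    (∀ v, ¬ G v v) ∧ (∀ u v, G u v → ¬ G v u) ∧
    ¬ Copies F G ∧ {p : Fin n × Fin n | G p.1 p.2}.ncard = m}

/-- The oriented matching with `k` arcs on `2k` vertices: arcs `2i → 2i+1`. -/
def orientedMatching (k : ℕ) (i j : Fin (2 * k)) : Prop :=
  (i : ℕ) % 2 = 0 ∧ (j : ℕ) = (i : ℕ) + 1

open Finset
open scoped Classical

namespace Stmt10

variable {n : ℕ} {G : Fin n → Fin n → Prop}

/-- adjacency -/
def A (G : Fin n → Fin n → Prop) (u v : Fin n) : Prop := G u v ∨ G v u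

/-- matching (oriented) -/
def IsM (G : Fin n → Fin n → Prop) (M : Finset (Fin n × Fin n)) : Prop :=
  (∀ p ∈ M, G p.1 p.2) ∧
  ∀ p ∈ M, ∀ q ∈ M, p ≠ q → p.1 ≠ q.1 ∧ p.1 ≠ q.2 ∧ p.2 ≠ q.1 ∧ p.2 ≠ q.2

/-- vertex set of a matching -/
def V (M : Finset (Fin n × Fin n)) : Finset (Fin n) :=
  M.biUnion (fun p => {p.1, p.2})

lemma mem_V {M : Finset (Fin n × Fin n)} {v : Fin n} :
    v ∈ V M ↔ ∃ p ∈ M, v = p.1 ∨ v = p.2 := by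
  simp [V, mem_biUnion]

lemma V_subset {M M' : Finset (Fin n × Fin n)} (h : M' ⊆ M) : V M' ⊆ V M :=
  Finset.biUnion_subset_biUnion_of_subset_left _ h

lemma IsM_subset {M M' : Finset (Fin n × Fin n)} (h : M' ⊆ M) (hM : IsM G M) :
    IsM G M' :=
  ⟨fun p hp => hM.1 p (h hp), fun p hp q hq => hM.2 p (h hp) q (h hq)⟩

lemma ne_of_arc (hirr : ∀ v, ¬ G v v) {a b : Fin n} (h : G a b) : a ≠ b := by
  rintro rfl; exact hirr a h

lemma A_irr (hirr : ∀ v, ¬ G v v) (v : Fin n) : ¬ A G v v := by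
  intro h; rcases h with h | h <;> exact hirr v h

lemma A_comm {u v : Fin n} : A G u v ↔ A G v u := or_comm

lemma card_V (hirr : ∀ v, ¬ G v v) {M : Finset (Fin n × Fin n)} (hM : IsM G M) :
    (V M).card = 2 * M.card := by
  rw [V, Finset.card_biUnion]
  · rw [Finset.sum_congr rfl (fun p hp => ?_), Finset.sum_const, smul_eq_mul, mul_comm]
    rw [Finset.card_insert_of_notMem (by simp [ne_of_arc hirr (hM.1 p hp)]),
      Finset.card_singleton]
  · intro p hp q hq hpq
    have h4 := hM.2 p hp q hq hpq
    simp only [Finset.disjoint_insert_left, Finset.disjoint_singleton_left,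
      Finset.mem_insert, Finset.mem_singleton]
    tauto

lemma sum_V (hirr : ∀ v, ¬ G v v) {M : Finset (Fin n × Fin n)} (hM : IsM G M)
    (f : Fin n → ℕ) : ∑ v ∈ V M, f v = ∑ p ∈ M, (f p.1 + f p.2) := by
  rw [V, Finset.sum_biUnion]
  · exact Finset.sum_congr rfl (fun p hp => by
      rw [Finset.sum_insert (by simp [ne_of_arc hirr (hM.1 p hp)]), Finset.sum_singleton])
  · intro p hp q hq hpq
    have h4 := hM.2 p hp q hq hpq
    simp only [Finset.disjoint_insert_left, Finset.disjoint_singleton_left,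
      Finset.mem_insert, Finset.mem_singleton]
    tauto

lemma not_mem_V_erase (hirr : ∀ v, ¬ G v v) {M : Finset (Fin n × Fin n)}
    (hM : IsM G M) {p : Fin n × Fin n} (hp : p ∈ M) {v : Fin n}
    (hv : v = p.1 ∨ v = p.2) : v ∉ V (M.erase p) := by
  intro h
  rcases mem_V.1 h with ⟨q, hq, hvq⟩
  have hqM := Finset.mem_of_mem_erase hq
  have hne : p ≠ q := Ne.symm (Finset.ne_of_mem_erase hq)
  have h4 := hM.2 p hp q hqM hne
  rcases hv with rfl | rfl <;> rcases hvq with h | h <;> tauto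

lemma V_insert {M : Finset (Fin n × Fin n)} {q : Fin n × Fin n} :
    V (insert q M) = insert q.1 (insert q.2 (V M)) := by
  rw [V, Finset.biUnion_insert]; ext v;
  simp [V, Finset.mem_union, Finset.mem_insert]

/-- insert an A-edge with fresh endpoints into a matching -/
lemma IsM_insert (hirr : ∀ v, ¬ G v v) {M : Finset (Fin n × Fin n)}
    (hM : IsM G M) {a b : Fin n} (hA : A G a b)
    (ha : a ∉ V M) (hb : b ∉ V M) :
    ∃ M' : Finset (Fin n × Fin n), IsM G M' ∧ M'.card = M.card + 1 ∧
      V M' = insert a (insert b (V M)) := by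
  have hab : a ≠ b := by rintro rfl; exact A_irr hirr a hA
  obtain ⟨c, d, hG, hcd⟩ : ∃ c d, G c d ∧ ((c = a ∧ d = b) ∨ (c = b ∧ d = a)) := by
    rcases hA with h | h
    · exact ⟨a, b, h, Or.inl ⟨rfl, rfl⟩⟩
    · exact ⟨b, a, h, Or.inr ⟨rfl, rfl⟩⟩
  have hc : c ∉ V M := by rcases hcd with ⟨rfl, rfl⟩ | ⟨rfl, rfl⟩ <;> assumption
  have hd : d ∉ V M := by rcases hcd with ⟨rfl, rfl⟩ | ⟨rfl, rfl⟩ <;> assumption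
  have hmemV : ∀ p ∈ M, p.1 ∈ V M ∧ p.2 ∈ V M := fun p hp =>
    ⟨mem_V.2 ⟨p, hp, Or.inl rfl⟩, mem_V.2 ⟨p, hp, Or.inr rfl⟩⟩
  have hnotmem : (c, d) ∉ M := fun h => hc (hmemV _ h).1
  refine ⟨insert (c, d) M, ⟨?_, ?_⟩, by rw [Finset.card_insert_of_notMem hnotmem], ?_⟩
  · intro p hp
    rcases Finset.mem_insert.1 hp with rfl | hp
    · exact hG
    · exact hM.1 p hp
  · intro p hp q hq hpq
    rcases Finset.mem_insert.1 hp with rfl | hp <;> rcases Finset.mem_insert.1 hq with rfl | hq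
    · exact (hpq rfl).elim
    · have := hmemV q hq
      exact ⟨fun h => hc (by rw [show c = q.1 from h]; exact this.1),
        fun h => hc (by rw [show c = q.2 from h]; exact this.2),
        fun h => hd (by rw [show d = q.1 from h]; exact this.1),
        fun h => hd (by rw [show d = q.2 from h]; exact this.2)⟩
    · have := hmemV p hp
      exact ⟨fun h => hc (by rw [← show p.1 = c from h]; exact this.1),
        fun h => hd (by rw [← show p.1 = d from h]; exact this.1),
        fun h => hc (by rw [← show p.2 = c from h]; exact this.2),
        fun h => hd (by rw [← show p.2 = d from h]; exact this.2)⟩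
    · exact hM.2 p hp q hq hpq
  · rw [V_insert]
    rcases hcd with ⟨rfl, rfl⟩ | ⟨rfl, rfl⟩
    · rfl
    · ext v; simp only [Finset.mem_insert]; tauto


lemma no_k_matching {k : ℕ} (hirr : ∀ v, ¬ G v v)
    (hfree : ¬ Copies (orientedMatching k) G)
    {M : Finset (Fin n × Fin n)} (hM : IsM G M) : M.card < k := by
  by_contra hcard
  push_neg at hcard
  obtain ⟨M', hsub, hcard'⟩ := Finset.exists_subset_card_eq hcard
  have hM' : IsM G M' := IsM_subset hsub hM
  apply hfree
  set pr : Fin k → Fin n × Fin n :=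
    fun t => ((M'.equivFinOfCardEq hcard').symm t : Fin n × Fin n) with hpr
  have hprM : ∀ t, pr t ∈ M' := fun t => ((M'.equivFinOfCardEq hcard').symm t).2
  have hprInj : Function.Injective pr := fun s t h =>
    (M'.equivFinOfCardEq hcard').symm.injective (Subtype.ext h)
  refine ⟨fun j => if (j : ℕ) % 2 = 0 then (pr ⟨(j : ℕ) / 2, by omega⟩).1
    else (pr ⟨(j : ℕ) / 2, by omega⟩).2, ?_, ?_⟩
  · intro i j hij
    have hik : (i : ℕ) / 2 < k := by omega
    have hjk : (j : ℕ) / 2 < k := by omega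
    by_cases hd : ((i : ℕ) / 2 : ℕ) = (j : ℕ) / 2
    · have hd' : (⟨(i : ℕ) / 2, hik⟩ : Fin k) = ⟨(j : ℕ) / 2, hjk⟩ := Fin.ext hd
      by_cases hii : (i : ℕ) % 2 = 0 <;> by_cases hjj : (j : ℕ) % 2 = 0 <;>
        simp only [hii, hjj, if_true, if_false, if_pos, if_neg] at hij ⊢
      · exact Fin.ext (by omega)
      · exfalso; rw [hd'] at hij
        exact ne_of_arc hirr (hM'.1 _ (hprM ⟨(j : ℕ) / 2, hjk⟩)) hij
      · exfalso; rw [hd'] at hij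
        exact ne_of_arc hirr (hM'.1 _ (hprM ⟨(j : ℕ) / 2, hjk⟩)) hij.symm
      · exact Fin.ext (by omega)
    · exfalso
      have hne : pr ⟨(i : ℕ) / 2, hik⟩ ≠ pr ⟨(j : ℕ) / 2, hjk⟩ :=
        fun h => hd (by simpa using hprInj h)
      have h4 := hM'.2 _ (hprM ⟨(i : ℕ) / 2, hik⟩) _ (hprM ⟨(j : ℕ) / 2, hjk⟩) hne
      by_cases hii : (i : ℕ) % 2 = 0 <;> by_cases hjj : (j : ℕ) % 2 = 0 <;>
        simp only [hii, hjj, if_true, if_false, if_pos, if_neg] at hij <;> tauto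
  · intro a b hab
    obtain ⟨ha2, hb1⟩ := hab
    have hb2 : ¬ (b : ℕ) % 2 = 0 := by omega
    have hdiv : (b : ℕ) / 2 = (a : ℕ) / 2 := by omega
    simp only [ha2, hb2, if_true, if_false, if_pos, if_neg, hdiv]
    exact hM'.1 _ (hprM _)


lemma two_choose_two (a : ℕ) : 2 * a.choose 2 + a = a * a := by
  induction a with
  | zero => rfl
  | succ t ih =>
    rw [Nat.choose_succ_succ, Nat.choose_one_right]
    have h : (t+1) * (t+1) = t*t + 2*t + 1 := by ring
    have h2 : 2 * (t + t.choose 2) = 2*t + 2*t.choose 2 := by ring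
    linarith [ih, h, h2]

lemma handshake (hasym : ∀ u v, G u v → ¬ G v u) :
    2 * (univ.filter (fun p : Fin n × Fin n => G p.1 p.2)).card
      = ∑ v : Fin n, (univ.filter (fun u => A G v u)).card := by
  set E := univ.filter (fun p : Fin n × Fin n => G p.1 p.2) with hE
  have h1 : ∑ v : Fin n, (univ.filter (fun u => A G v u)).card
      = (univ.filter (fun p : Fin n × Fin n => A G p.1 p.2)).card := by
    rw [Finset.card_filter, Fintype.sum_prod_type]
    exact Finset.sum_congr rfl (fun v _ => (Finset.card_filter _ _))
  have h3 : univ.filter (fun p : Fin n × Fin n => A G p.1 p.2)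
      = E ∪ E.image Prod.swap := by
    ext p
    simp only [hE, Finset.mem_filter, Finset.mem_union, Finset.mem_image,
      Finset.mem_univ, true_and]
    simp only [A]
    constructor
    · rintro (h | h)
      · exact Or.inl h
      · exact Or.inr ⟨(p.2, p.1), h, rfl⟩
    · rintro (h | ⟨q, hq, rfl⟩)
      · exact Or.inl h
      · exact Or.inr hq
  have hdisj : Disjoint E (E.image Prod.swap) := by
    rw [Finset.disjoint_left]
    rintro p hp hp'
    rcases Finset.mem_image.1 hp' with ⟨q, hq, rfl⟩
    simp only [hE, Finset.mem_filter, Finset.mem_univ, true_and] at hp hq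
    exact hasym _ _ hq hp
  rw [h1, h3, Finset.card_union_of_disjoint hdisj,
    Finset.card_image_of_injective _ Prod.swap_injective]
  ring


lemma ends_or {p : Fin n × Fin n} {a b : Fin n} (hab : p = (a,b) ∨ p = (b,a)) :
    (a = p.1 ∨ a = p.2) ∧ (b = p.1 ∨ b = p.2) := by
  rcases hab with rfl | rfl
  · exact ⟨Or.inl rfl, Or.inr rfl⟩
  · exact ⟨Or.inr rfl, Or.inl rfl⟩

lemma ends_ne {p : Fin n × Fin n} {a b : Fin n} (hirr : ∀ v, ¬ G v v)
    (hG : G p.1 p.2) (hab : p = (a,b) ∨ p = (b,a)) : a ≠ b := by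
  have := ne_of_arc hirr hG
  rcases hab with rfl | rfl
  · exact this
  · exact this.symm

lemma aug_F1 (hirr : ∀ v, ¬ G v v) {M : Finset (Fin n × Fin n)} (hM : IsM G M)
    (hmax : ∀ M', IsM G M' → M'.card ≤ M.card)
    {p : Fin n × Fin n} {a b : Fin n} (hp : p ∈ M) (hab : p = (a,b) ∨ p = (b,a))
    {w w' : Fin n} (hw : w ∉ V M) (hw' : w' ∉ V M)
    (hA1 : A G a w) (hA2 : A G b w') : w = w' := by
  by_contra hww
  have hends := ends_or hab
  have haV : a ∈ V M := mem_V.2 ⟨p, hp, hends.1⟩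
  have hbV : b ∈ V M := mem_V.2 ⟨p, hp, hends.2⟩
  have habne : a ≠ b := ends_ne hirr (hM.1 p hp) hab
  have hM₁ : IsM G (M.erase p) := IsM_subset (Finset.erase_subset p M) hM
  have haM₁ : a ∉ V (M.erase p) := not_mem_V_erase hirr hM hp hends.1
  have hbM₁ : b ∉ V (M.erase p) := not_mem_V_erase hirr hM hp hends.2
  have hwM₁ : w ∉ V (M.erase p) := fun h => hw (V_subset (Finset.erase_subset p M) h)
  have hw'M₁ : w' ∉ V (M.erase p) := fun h => hw' (V_subset (Finset.erase_subset p M) h)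
  obtain ⟨M₂, hM₂, hc₂, hV₂⟩ := IsM_insert hirr hM₁ hA2 hbM₁ hw'M₁
  have haM₂ : a ∉ V M₂ := by
    rw [hV₂]
    simp only [Finset.mem_insert]
    push_neg
    exact ⟨habne, fun h => hw' (h ▸ haV), haM₁⟩
  have hwM₂ : w ∉ V M₂ := by
    rw [hV₂]
    simp only [Finset.mem_insert]
    push_neg
    exact ⟨fun h => hw (h ▸ hbV), hww, hwM₁⟩
  obtain ⟨M₃, hM₃, hc₃, -⟩ := IsM_insert hirr hM₂ hA1 haM₂ hwM₂
  have hle := hmax M₃ hM₃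
  have hcard := Finset.card_erase_add_one hp
  omega

lemma ne_of_h4 {p q : Fin n × Fin n}
    (h4 : p.1 ≠ q.1 ∧ p.1 ≠ q.2 ∧ p.2 ≠ q.1 ∧ p.2 ≠ q.2) {x y : Fin n}
    (hx : x = p.1 ∨ x = p.2) (hy : y = q.1 ∨ y = q.2) : x ≠ y := by
  obtain ⟨k1, k2, k3, k4⟩ := h4
  rcases hx with rfl | rfl <;> rcases hy with rfl | rfl <;> assumption

lemma aug_F2 (hirr : ∀ v, ¬ G v v) {M : Finset (Fin n × Fin n)} (hM : IsM G M)
    (hmax : ∀ M', IsM G M' → M'.card ≤ M.card)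
    {p q : Fin n × Fin n} {a b c d : Fin n} (hp : p ∈ M) (hq : q ∈ M) (hpq : p ≠ q)
    (hab : p = (a,b) ∨ p = (b,a)) (hcd : q = (c,d) ∨ q = (d,c))
    {w w' : Fin n} (hw : w ∉ V M) (hw' : w' ∉ V M) (hww : w ≠ w')
    (hA1 : A G a w) (hA2 : A G c w') (hA3 : A G b d) : False := by
  have hends1 := ends_or hab
  have hends2 := ends_or hcd
  have haV : a ∈ V M := mem_V.2 ⟨p, hp, hends1.1⟩
  have hbV : b ∈ V M := mem_V.2 ⟨p, hp, hends1.2⟩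
  have hcV : c ∈ V M := mem_V.2 ⟨q, hq, hends2.1⟩
  have hdV : d ∈ V M := mem_V.2 ⟨q, hq, hends2.2⟩
  have habne : a ≠ b := ends_ne hirr (hM.1 p hp) hab
  have hcdne : c ≠ d := ends_ne hirr (hM.1 q hq) hcd
  have h4 := hM.2 p hp q hq hpq
  have hac : a ≠ c := ne_of_h4 h4 hends1.1 hends2.1
  have had : a ≠ d := ne_of_h4 h4 hends1.1 hends2.2
  have hbc : b ≠ c := ne_of_h4 h4 hends1.2 hends2.1
  have hbd : b ≠ d := ne_of_h4 h4 hends1.2 hends2.2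
  -- double erase
  have hq1 : q ∈ M.erase p := Finset.mem_erase_of_ne_of_mem (Ne.symm hpq) hq
  set M₁ := (M.erase p).erase q with hM₁def
  have hsub1 : M₁ ⊆ M := (Finset.erase_subset q (M.erase p)).trans (Finset.erase_subset p M)
  have hMep : IsM G (M.erase p) := IsM_subset (Finset.erase_subset p M) hM
  have hM₁ : IsM G M₁ := IsM_subset (Finset.erase_subset q (M.erase p)) hMep
  have haM₁ : a ∉ V M₁ :=
    fun h => not_mem_V_erase hirr hM hp hends1.1 (V_subset (Finset.erase_subset q _) h)
  have hbM₁ : b ∉ V M₁ :=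
    fun h => not_mem_V_erase hirr hM hp hends1.2 (V_subset (Finset.erase_subset q _) h)
  have hcM₁ : c ∉ V M₁ := not_mem_V_erase hirr hMep hq1 hends2.1
  have hdM₁ : d ∉ V M₁ := not_mem_V_erase hirr hMep hq1 hends2.2
  have hwM₁ : w ∉ V M₁ := fun h => hw (V_subset hsub1 h)
  have hw'M₁ : w' ∉ V M₁ := fun h => hw' (V_subset hsub1 h)
  obtain ⟨M₂, hM₂, hc₂, hV₂⟩ := IsM_insert hirr hM₁ hA3 hbM₁ hdM₁
  have hcM₂ : c ∉ V M₂ := by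
    rw [hV₂]; simp only [Finset.mem_insert]; push_neg
    exact ⟨hbc.symm, hcdne, hcM₁⟩
  have hw'M₂ : w' ∉ V M₂ := by
    rw [hV₂]; simp only [Finset.mem_insert]; push_neg
    exact ⟨fun h => hw' (h ▸ hbV), fun h => hw' (h ▸ hdV), hw'M₁⟩
  obtain ⟨M₃, hM₃, hc₃, hV₃⟩ := IsM_insert hirr hM₂ hA2 hcM₂ hw'M₂
  have haM₃ : a ∉ V M₃ := by
    rw [hV₃, hV₂]; simp only [Finset.mem_insert]; push_neg
    exact ⟨hac, fun h => hw' (h ▸ haV), habne, had, haM₁⟩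
  have hwM₃ : w ∉ V M₃ := by
    rw [hV₃, hV₂]; simp only [Finset.mem_insert]; push_neg
    exact ⟨fun h => hw (h ▸ hcV), hww, fun h => hw (h ▸ hbV), fun h => hw (h ▸ hdV), hwM₁⟩
  obtain ⟨M₄, hM₄, hc₄, -⟩ := IsM_insert hirr hM₃ hA1 haM₃ hwM₃
  have hle := hmax M₄ hM₄
  have hcard1 := Finset.card_erase_add_one hp
  have hcard2 := Finset.card_erase_add_one hq1
  rw [← hM₁def] at hcard2
  omega


lemma upper {k : ℕ} (hk : 1 ≤ k) (hn : 10*k*k + 10*k + 10 ≤ n)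
    (hirr : ∀ v, ¬ G v v) (hasym : ∀ u v, G u v → ¬ G v u)
    (hfree : ¬ Copies (orientedMatching k) G) :
    (univ.filter (fun p : Fin n × Fin n => G p.1 p.2)).card ≤
      (k - 1) * (n - k + 1) + (k - 1).choose 2 := by
  classical
  -- maximum matching
  set P : ℕ → Prop := fun j => ∃ M, IsM G M ∧ M.card = j with hP
  have hP0 : P 0 := ⟨∅, ⟨fun p hp => absurd hp (Finset.notMem_empty p),
    fun p hp => absurd hp (Finset.notMem_empty p)⟩, Finset.card_empty⟩
  set m := Nat.findGreatest P k with hm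
  have hPm : P m := Nat.findGreatest_spec (Nat.zero_le k) hP0
  obtain ⟨M, hM, hMcard⟩ := hPm
  have hmk : m < k := hMcard ▸ no_k_matching hirr hfree hM
  have hmax : ∀ M', IsM G M' → M'.card ≤ M.card := by
    intro M' hM'
    by_contra hgt
    push_neg at hgt
    have h1 : m + 1 ≤ M'.card := by omega
    obtain ⟨M'', hsub, hc⟩ := Finset.exists_subset_card_eq h1
    have hng : ¬ P (m+1) := Nat.findGreatest_is_greatest
      (show Nat.findGreatest P k < m + 1 by rw [← hm]; omega) (by omega)
    exact hng ⟨M'', IsM_subset hsub hM', hc⟩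
  -- vertex sets
  set W : Finset (Fin n) := (V M)ᶜ with hW
  have hVcard : (V M).card = 2 * m := by rw [card_V hirr hM, hMcard]
  have hVle : (V M).card ≤ n := le_trans (Finset.card_le_univ _) (by simp)
  have hWcard : W.card + 2 * m = n := by
    rw [hW, Finset.card_compl]
    simp only [Fintype.card_fin]
    omega
  have hWV : ∀ w ∈ W, w ∉ V M := fun w hw => Finset.mem_compl.1 hw
  have hVW : ∀ v ∈ V M, v ∉ W := fun v hv h => (Finset.mem_compl.1 h) hv
  -- degrees
  set dW : Fin n → ℕ := fun v => (W.filter (fun u => A G v u)).card with hdW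
  set degU : Fin n → ℕ := fun v => ((V M).filter (fun u => A G v u)).card with hdegU
  set deg : Fin n → ℕ := fun v => (univ.filter (fun u => A G v u)).card with hdeg
  have hdeg_split : ∀ v, deg v = degU v + dW v := by
    intro v
    rw [hdeg, hdegU, hdW]
    rw [← Finset.card_union_of_disjoint
      (Finset.disjoint_filter_filter disjoint_compl_right),
      ← Finset.filter_union, Finset.union_compl]
  have hdeg_lt : ∀ v, deg v + 1 ≤ n := by
    intro v
    have hsub : univ.filter (fun u => A G v u) ⊆ univ.erase v := by
      intro u hu
      rcases Finset.mem_filter.1 hu with ⟨-, hA⟩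
      exact Finset.mem_erase.2 ⟨fun h => A_irr hirr v (h ▸ hA), Finset.mem_univ u⟩
    have := Finset.card_le_card hsub
    rw [Finset.card_erase_of_mem (Finset.mem_univ v)] at this
    simp only [Finset.card_univ, Fintype.card_fin] at this
    have hn1 : 1 ≤ n := by omega
    have h2 : deg v ≤ n - 1 := this
    omega
  -- W independent
  have hWind : ∀ w ∈ W, ∀ w' ∈ W, ¬ A G w w' := by
    intro w hw w' hw' hA
    obtain ⟨M', hM', hc, -⟩ := IsM_insert hirr hM hA (hWV w hw) (hWV w' hw')
    have := hmax M' hM'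
    omega
  have hdWW : ∀ w ∈ W, dW w = 0 := by
    intro w hw
    rw [hdW, Finset.card_eq_zero, Finset.filter_eq_empty_iff]
    exact fun x hx => hWind w hw x hx
  -- handshake and splitting
  set E := univ.filter (fun p : Fin n × Fin n => G p.1 p.2) with hE
  have hhs : 2 * E.card = ∑ v : Fin n, deg v := handshake hasym
  have hsplit : ∑ v : Fin n, deg v = ∑ v ∈ V M, deg v + ∑ w ∈ W, deg w := by
    rw [hW, Finset.sum_add_sum_compl]
  have hcross : ∑ w ∈ W, deg w = ∑ p ∈ M, (dW p.1 + dW p.2) := by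
    have h1 : ∀ w ∈ W, deg w = degU w := by
      intro w hw
      rw [hdeg_split w, hdWW w hw]
      omega
    rw [Finset.sum_congr rfl h1, ← sum_V hirr hM]
    rw [hdegU, hdW]
    have h2 : ∀ w u, (if A G w u then (1:ℕ) else 0) = if A G u w then 1 else 0 := by
      intro w u
      by_cases h : A G w u
      · rw [if_pos h, if_pos (A_comm.1 h)]
      · rw [if_neg h, if_neg (fun h' => h (A_comm.1 h'))]
    calc ∑ w ∈ W, ((V M).filter (fun u => A G w u)).card
        = ∑ w ∈ W, ∑ u ∈ V M, if A G w u then 1 else 0 :=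
          Finset.sum_congr rfl (fun w _ => Finset.card_filter _ _)
      _ = ∑ u ∈ V M, ∑ w ∈ W, if A G w u then 1 else 0 := Finset.sum_comm
      _ = ∑ u ∈ V M, ∑ w ∈ W, if A G u w then 1 else 0 :=
          Finset.sum_congr rfl (fun u _ => Finset.sum_congr rfl (fun w _ => h2 w u))
      _ = ∑ u ∈ V M, (W.filter (fun w => A G u w)).card :=
          Finset.sum_congr rfl (fun u _ => (Finset.card_filter _ _).symm)
  have hVdeg : ∑ v ∈ V M, deg v = ∑ p ∈ M, (deg p.1 + deg p.2) := sum_V hirr hM deg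
  -- per-pair F1 bound
  have hW2 : 2 ≤ W.card := by omega
  have hF1b : ∀ p ∈ M, dW p.1 + dW p.2 ≤ W.card := by
    intro p hp
    by_cases h1 : dW p.1 = 0
    · have : dW p.2 ≤ W.card := Finset.card_filter_le _ _
      omega
    by_cases h2 : dW p.2 = 0
    · have : dW p.1 ≤ W.card := Finset.card_filter_le _ _
      omega
    · obtain ⟨w', hw'⟩ := Finset.card_pos.1 (Nat.pos_of_ne_zero h2)
      rcases Finset.mem_filter.1 hw' with ⟨hw'W, hA2⟩
      have hle1 : dW p.1 ≤ 1 := by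
        apply Finset.card_le_one.2
        intro a ha b hb
        rcases Finset.mem_filter.1 ha with ⟨haW, hAa⟩
        rcases Finset.mem_filter.1 hb with ⟨hbW, hAb⟩
        have e1 := aug_F1 hirr hM hmax hp (Or.inl rfl) (hWV a haW) (hWV w' hw'W) hAa hA2
        have e2 := aug_F1 hirr hM hmax hp (Or.inl rfl) (hWV b hbW) (hWV w' hw'W) hAb hA2
        rw [e1, e2]
      obtain ⟨w, hw⟩ := Finset.card_pos.1 (Nat.pos_of_ne_zero h1)
      rcases Finset.mem_filter.1 hw with ⟨hwW, hA1⟩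
      have hle2 : dW p.2 ≤ 1 := by
        apply Finset.card_le_one.2
        intro a ha b hb
        rcases Finset.mem_filter.1 ha with ⟨haW, hAa⟩
        rcases Finset.mem_filter.1 hb with ⟨hbW, hAb⟩
        have e1 := aug_F1 hirr hM hmax hp (Or.inr rfl) (hWV a haW) (hWV w hwW) hAa hA1
        have e2 := aug_F1 hirr hM hmax hp (Or.inr rfl) (hWV b hbW) (hWV w hwW) hAb hA1
        rw [e1, e2]
      omega
  -- target preparation
  set a := k - 1 with ha
  have hak : a + 1 = k := by omega
  set D := n - k + 1 with hD
  have hDk : D + a = n := by omega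
  have hch := two_choose_two a
  suffices h2E : 2 * E.card ≤ 2 * (a * D) + 2 * a.choose 2 by linarith
  by_cases hcase : m + 1 = k ∧ ∀ p ∈ M, 2 ≤ dW p.1 ∨ 2 ≤ dW p.2
  · -- extremal case
    obtain ⟨hm1, hGood⟩ := hcase
    set str : Fin n × Fin n → Fin n := fun p => if 2 ≤ dW p.1 then p.1 else p.2 with hstr
    set wk : Fin n × Fin n → Fin n := fun p => if 2 ≤ dW p.1 then p.2 else p.1 with hwk
    have hends : ∀ p : Fin n × Fin n, p = (str p, wk p) ∨ p = (wk p, str p) := by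
      intro p
      by_cases h : 2 ≤ dW p.1
      · left; rw [hstr, hwk]; simp only [if_pos h]
      · right; rw [hstr, hwk]; simp only [if_neg h]
    have hstr2 : ∀ p ∈ M, 2 ≤ dW (str p) := by
      intro p hp
      by_cases h : 2 ≤ dW p.1
      · rw [hstr]; simp only [if_pos h]; exact h
      · rw [hstr]; simp only [if_neg h]
        rcases hGood p hp with h' | h'
        · exact absurd h' h
        · exact h'
    have hwk0 : ∀ p ∈ M, ∀ w ∈ W, ¬ A G (wk p) w := by
      intro p hp w hw hA
      obtain ⟨w₁, hw₁, w₂, hw₂, hww⟩ := Finset.one_lt_card.1 (hstr2 p hp)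
      rcases Finset.mem_filter.1 hw₁ with ⟨hw₁W, hA₁⟩
      rcases Finset.mem_filter.1 hw₂ with ⟨hw₂W, hA₂⟩
      have e1 := aug_F1 hirr hM hmax hp (hends p) (hWV _ hw₁W) (hWV _ hw) hA₁ hA
      have e2 := aug_F1 hirr hM hmax hp (hends p) (hWV _ hw₂W) (hWV _ hw) hA₂ hA
      exact hww (e1.trans e2.symm)
    have hdWwk : ∀ p ∈ M, dW (wk p) = 0 := by
      intro p hp
      have : W.filter (fun u => A G (wk p) u) = ∅ :=
        Finset.filter_eq_empty_iff.2 (fun x hx => hwk0 p hp x hx)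
      show (W.filter (fun u => A G (wk p) u)).card = 0
      rw [this, Finset.card_empty]
    have hF2' : ∀ p ∈ M, ∀ q ∈ M, p ≠ q → ¬ A G (wk p) (wk q) := by
      intro p hp q hq hpq hA
      obtain ⟨w₁, hw₁, w₂, hw₂, hww⟩ := Finset.one_lt_card.1 (hstr2 p hp)
      rcases Finset.mem_filter.1 hw₁ with ⟨hw₁W, hA₁⟩
      rcases Finset.mem_filter.1 hw₂ with ⟨hw₂W, hA₂⟩
      obtain ⟨w', hw', -, -, -⟩ := Finset.one_lt_card.1 (hstr2 q hq)
      rcases Finset.mem_filter.1 hw' with ⟨hw'W, hA'⟩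
      have hpick : w₁ ≠ w' ∨ w₂ ≠ w' := by
        by_contra hc
        push_neg at hc
        exact hww (hc.1.trans hc.2.symm)
      rcases hpick with hne | hne
      · exact aug_F2 hirr hM hmax hp hq hpq (hends p) (hends q)
          (hWV _ hw₁W) (hWV _ hw'W) hne hA₁ hA' hA
      · exact aug_F2 hirr hM hmax hp hq hpq (hends p) (hends q)
          (hWV _ hw₂W) (hWV _ hw'W) hne hA₂ hA' hA
    have hdegUwk : ∀ p ∈ M, degU (wk p) ≤ M.card := by
      intro p hp
      have hsub : (V M).filter (fun u => A G (wk p) u) ⊆ M.image str := by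
        intro u hu
        rcases Finset.mem_filter.1 hu with ⟨huV, hAu⟩
        rcases mem_V.1 huV with ⟨q, hq, hq12⟩
        have huq : u = str q ∨ u = wk q := by
          rcases hends q with he | he
          · rcases hq12 with h | h
            · exact Or.inl (h.trans (congrArg Prod.fst he))
            · exact Or.inr (h.trans (congrArg Prod.snd he))
          · rcases hq12 with h | h
            · exact Or.inr (h.trans (congrArg Prod.fst he))
            · exact Or.inl (h.trans (congrArg Prod.snd he))
        rcases huq with rfl | rfl
        · exact Finset.mem_image.2 ⟨q, hq, rfl⟩
        · exfalso
          by_cases hpq : p = q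
          · subst hpq; exact A_irr hirr _ hAu
          · exact hF2' p hp q hq hpq hAu
      calc degU (wk p) ≤ (M.image str).card := Finset.card_le_card hsub
        _ ≤ M.card := Finset.card_image_le
    have hbound1 : ∑ p ∈ M, (deg p.1 + deg p.2) + M.card ≤ M.card * (n + M.card) := by
      have hb : ∀ p ∈ M, deg p.1 + deg p.2 + 1 ≤ n + M.card := by
        intro p hp
        have h1 : deg p.1 + deg p.2 = deg (str p) + deg (wk p) := by
          rw [hstr, hwk]
          by_cases h : 2 ≤ dW p.1
          · simp only [if_pos h]
          · simp only [if_neg h]; omega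
        have h2 : deg (str p) + 1 ≤ n := hdeg_lt _
        have h3 : deg (wk p) ≤ M.card := by
          have h4 := hdeg_split (wk p)
          have h5 := hdegUwk p hp
          have h6 := hdWwk p hp
          omega
        omega
      calc ∑ p ∈ M, (deg p.1 + deg p.2) + M.card
          = ∑ p ∈ M, (deg p.1 + deg p.2 + 1) := by
            rw [Finset.sum_add_distrib (s := M) (f := fun p => deg p.1 + deg p.2)
              (g := fun _ => 1), Finset.sum_const, smul_eq_mul, mul_one]
        _ ≤ ∑ _p ∈ M, (n + M.card) := Finset.sum_le_sum hb
        _ = M.card * (n + M.card) := by rw [Finset.sum_const, smul_eq_mul]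
    have hbound2 : ∑ p ∈ M, (dW p.1 + dW p.2) ≤ M.card * W.card := by
      calc ∑ p ∈ M, (dW p.1 + dW p.2) ≤ ∑ _p ∈ M, W.card := Finset.sum_le_sum hF1b
        _ = M.card * W.card := by rw [Finset.sum_const, smul_eq_mul]
    have key : 2 * E.card + M.card ≤ M.card * (n + M.card) + M.card * W.card := by
      linarith [hhs, hsplit, hcross, hVdeg, hbound1, hbound2]
    have hma : M.card = a := by omega
    rw [hma] at key
    have hWa : W.card + 2 * a = n := by omega
    have ha1 : a * (n + a) = a * n + a * a := by ring
    have ha2 : a * (W.card + 2 * a) = a * W.card + 2 * (a * a) := by ring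
    have ha2' : a * (W.card + 2 * a) = a * n := by rw [hWa]
    have ha3 : a * (D + a) = a * D + a * a := by ring
    have ha3' : a * (D + a) = a * n := by rw [hDk]
    linarith [key, hch, ha1, ha2, ha2', ha3, ha3']
  · -- non-extremal case
    have hk2 : 2 ≤ k := by
      by_contra h
      apply hcase
      have hm0 : M.card = 0 := by omega
      rw [Finset.card_eq_zero] at hm0
      constructor
      · omega
      · intro p hp
        rw [hm0] at hp
        exact absurd hp (Finset.notMem_empty p)
    have hScross : ∑ p ∈ M, (dW p.1 + dW p.2) ≤ (k-2) * W.card + 2 := by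
      rcases (not_and_or.1 hcase) with hbad | hbad
      · have hm2 : m + 2 ≤ k := by omega
        have h1 : ∑ p ∈ M, (dW p.1 + dW p.2) ≤ M.card * W.card := by
          calc ∑ p ∈ M, (dW p.1 + dW p.2) ≤ ∑ _p ∈ M, W.card := Finset.sum_le_sum hF1b
            _ = M.card * W.card := by rw [Finset.sum_const, smul_eq_mul]
        have h2 : M.card ≤ k - 2 := by omega
        have h3 := Nat.mul_le_mul_right W.card h2
        omega
      · push_neg at hbad
        obtain ⟨p₀, hp₀, hbad1, hbad2⟩ := hbad
        have hsum : (dW p₀.1 + dW p₀.2) + ∑ p ∈ M.erase p₀, (dW p.1 + dW p.2)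
            = ∑ p ∈ M, (dW p.1 + dW p.2) :=
          Finset.add_sum_erase M (fun p => dW p.1 + dW p.2) hp₀
        have herase : ∑ p ∈ M.erase p₀, (dW p.1 + dW p.2) ≤ (M.erase p₀).card * W.card := by
          calc ∑ p ∈ M.erase p₀, (dW p.1 + dW p.2)
              ≤ ∑ _p ∈ M.erase p₀, W.card :=
                Finset.sum_le_sum (fun p hp => hF1b p (Finset.mem_of_mem_erase hp))
            _ = (M.erase p₀).card * W.card := by rw [Finset.sum_const, smul_eq_mul]
        have hcarde := Finset.card_erase_add_one hp₀
        have h2 : (M.erase p₀).card ≤ k - 2 := by omega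
        have h3 := Nat.mul_le_mul_right W.card h2
        omega
    have hdegUle : ∀ v, degU v ≤ 2 * m := by
      intro v
      calc degU v ≤ (V M).card := Finset.card_filter_le _ _
        _ = 2 * m := hVcard
    have hSdegU : ∑ p ∈ M, (degU p.1 + degU p.2) ≤ M.card * (4 * m) := by
      calc ∑ p ∈ M, (degU p.1 + degU p.2) ≤ ∑ _p ∈ M, (4 * m) :=
            Finset.sum_le_sum (fun p _ => by
              have := hdegUle p.1
              have := hdegUle p.2
              omega)
        _ = M.card * (4 * m) := by rw [Finset.sum_const, smul_eq_mul]
    have hSvm : ∑ p ∈ M, (deg p.1 + deg p.2)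
        = ∑ p ∈ M, (degU p.1 + degU p.2) + ∑ p ∈ M, (dW p.1 + dW p.2) := by
      rw [← Finset.sum_add_distrib]
      exact Finset.sum_congr rfl (fun p _ => by
        rw [hdeg_split p.1, hdeg_split p.2]; ring)
    have hm4 : M.card * (4 * m) ≤ 4 * (k * k) := by
      calc M.card * (4 * m) ≤ k * (4 * k) :=
            Nat.mul_le_mul (by omega) (by omega)
        _ = 4 * (k * k) := by ring
    have key : 2 * E.card ≤ 4 * (k * k) + 2 * ((k-2) * W.card + 2) := by
      linarith [hhs, hsplit, hcross, hVdeg, hScross, hSdegU, hSvm, hm4]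
    set b := k - 2 with hb
    have hab : a = b + 1 := by omega
    have hwD : W.card ≤ D + a := by omega
    have hbw : b * W.card ≤ b * (D + a) := Nat.mul_le_mul_left b hwD
    have haD : a * D = b * D + D := by rw [hab]; ring
    have hba : b * (D + a) = b * D + b * a := by ring
    have hbak : b * a ≤ k * k := Nat.mul_le_mul (by omega) (by omega)
    have haa : a * a ≤ k * k := Nat.mul_le_mul (by omega) (by omega)
    have hDge : n ≤ D + k := by omega
    linarith [key, hch, hbw, haD, hba, hbak, haa, hDge, hn]


lemma sum_range_id_choose (a : ℕ) : ∑ j ∈ Finset.range a, j = a.choose 2 := by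
  cases a with
  | zero => rfl
  | succ t =>
    have hg : (∑ j ∈ Finset.range (t+1), j) * 2 = (t+1) * t := by
      simpa using Finset.sum_range_id_mul_two (t+1)
    have hc := two_choose_two (t+1)
    have hr : (t+1) * (t+1) = (t+1) * t + (t+1) := by ring
    omega

lemma lower_count {n k : ℕ} (hk : 1 ≤ k) (hkn : k ≤ n) :
    ((univ : Finset (Fin n × Fin n)).filter
      (fun p => (p.1 : ℕ) < k - 1 ∧ p.1 < p.2)).card
      = (k - 1) * (n - k + 1) + (k - 1).choose 2 := by
  classical
  rw [Finset.card_filter, Fintype.sum_prod_type]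
  have h1 : ∀ u : Fin n, (∑ v : Fin n, if (u : ℕ) < k - 1 ∧ u < v then (1:ℕ) else 0)
      = (fun i : ℕ => if i < k - 1 then n - 1 - i else 0) (u : ℕ) := by
    intro u
    simp only []
    by_cases h : (u : ℕ) < k - 1
    · rw [if_pos h]
      have heq : ∀ v : Fin n, (if (u : ℕ) < k - 1 ∧ u < v then (1:ℕ) else 0)
          = if u < v then 1 else 0 := by
        intro v
        by_cases h2 : u < v
        · rw [if_pos ⟨h, h2⟩, if_pos h2]
        · rw [if_neg (fun hc => h2 hc.2), if_neg h2]
      rw [Finset.sum_congr rfl (fun v _ => heq v), ← Finset.card_filter]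
      rw [Finset.filter_lt_eq_Ioi, Fin.card_Ioi]
    · rw [if_neg h]
      exact Finset.sum_eq_zero (fun v _ => if_neg (fun hc => h hc.1))
  rw [Finset.sum_congr rfl (fun u _ => h1 u)]
  rw [Fin.sum_univ_eq_sum_range (fun i : ℕ => if i < k - 1 then n - 1 - i else 0) n]
  rw [← Finset.sum_filter]
  have hrange : (Finset.range n).filter (fun i => i < k - 1) = Finset.range (k-1) := by
    ext i
    simp only [Finset.mem_filter, Finset.mem_range]
    omega
  rw [hrange]
  rw [← Finset.sum_range_reflect (fun i => n - 1 - i) (k-1)]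
  have h2 : ∀ j ∈ Finset.range (k-1), n - 1 - (k - 1 - 1 - j) = (n - k + 1) + j := by
    intro j hj
    rw [Finset.mem_range] at hj
    omega
  rw [Finset.sum_congr rfl h2, Finset.sum_add_distrib, Finset.sum_const,
    Finset.card_range, smul_eq_mul]
  rw [sum_range_id_choose]

lemma lower_free {n k : ℕ} (hk : 1 ≤ k) (hkn : k ≤ n) :
    ¬ Copies (orientedMatching k) (fun u v : Fin n => (u : ℕ) < k - 1 ∧ u < v) := by
  rintro ⟨f, hinj, harc⟩
  have h2 : ∀ t : ℕ, ∀ ht : t < k, ((f ⟨2*t, by omega⟩ : Fin n) : ℕ) < k - 1 := by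
    intro t ht
    have := harc ⟨2*t, by omega⟩ ⟨2*t+1, by omega⟩
      ⟨show (2*t) % 2 = 0 by omega, rfl⟩
    exact this.1
  set g : Fin k → ℕ := fun t => ((f ⟨2*(t:ℕ), by omega⟩ : Fin n) : ℕ) with hg
  have hginj : Function.Injective g := by
    intro s t hst
    have h3 : f ⟨2*(s:ℕ), by omega⟩ = f ⟨2*(t:ℕ), by omega⟩ := Fin.ext hst
    have h4 := hinj h3
    have h5 : 2*(s:ℕ) = 2*(t:ℕ) := congrArg Fin.val h4
    exact Fin.ext (by omega)
  have hsub : (univ : Finset (Fin k)).image g ⊆ Finset.range (k-1) := by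
    intro x hx
    rcases Finset.mem_image.1 hx with ⟨t, -, rfl⟩
    exact Finset.mem_range.2 (h2 (t : ℕ) t.2)
  have hcard := Finset.card_le_card hsub
  rw [Finset.card_image_of_injective _ hginj, Finset.card_univ, Fintype.card_fin,
    Finset.card_range] at hcard
  omega

end Stmt10

open Stmt10 in
/-- for `k ≥ 1` and sufficiently large `n`,
`exo(n, M_k) = (k-1)(n-k+1) + C(k-1, 2)`. -/
theorem stmt_10 (k : ℕ) (hk : 1 ≤ k) :
    ∃ N : ℕ, ∀ n ≥ N,
      exo n (orientedMatching k) = (k - 1) * (n - k + 1) + (k - 1).choose 2 := by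

  classical
  refine ⟨10*k*k + 10*k + 10, fun n hn => ?_⟩
  have hkn : k ≤ n := by nlinarith
  set T := (k - 1) * (n - k + 1) + (k - 1).choose 2 with hT
  set S := {m : ℕ | ∃ G : Fin n → Fin n → Prop,
    (∀ v, ¬ G v v) ∧ (∀ u v, G u v → ¬ G v u) ∧
    ¬ Copies (orientedMatching k) G ∧ {p : Fin n × Fin n | G p.1 p.2}.ncard = m} with hS
  have hmem : T ∈ S := by
    refine ⟨fun u v : Fin n => (u : ℕ) < k - 1 ∧ u < v, ?_, ?_, ?_, ?_⟩
    · rintro v ⟨-, h⟩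
      exact lt_irrefl v h
    · rintro u v ⟨-, h1⟩ ⟨-, h2⟩
      exact lt_irrefl u (h1.trans h2)
    · exact lower_free hk hkn
    · have hset : {p : Fin n × Fin n | (p.1 : ℕ) < k - 1 ∧ p.1 < p.2}
          = ↑((univ : Finset (Fin n × Fin n)).filter
            (fun p => (p.1 : ℕ) < k - 1 ∧ p.1 < p.2)) := by
        ext p
        simp
      rw [hset, Set.ncard_coe_finset]
      exact lower_count hk hkn
  have hub : ∀ x ∈ S, x ≤ T := by
    rintro x ⟨G, hirr, hasym, hfree, hcard⟩
    have hset : {p : Fin n × Fin n | G p.1 p.2}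
        = ↑((univ : Finset (Fin n × Fin n)).filter (fun p => G p.1 p.2)) := by
      ext p
      simp
    rw [hset, Set.ncard_coe_finset] at hcard
    rw [← hcard]
    exact Stmt10.upper hk hn hirr hasym hfree
  show sSup S = T
  exact le_antisymm (csSup_le ⟨T, hmem⟩ hub) (le_csSup ⟨T, hub⟩ hmem)
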